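/- Let ρ ∈ (0,1), let π be a bounded probability density on [0,1], and let b : [0,1]² → ℝ be bounded and measurable. Define the iteration map Φ(g)(x,y) = ρ·π(y)·∫*_{u=x}^{y} [g(x,u) + g(y,u)] du + b(x,y), let g₀ : [0,1]² → ℝ be bounded measurable, and set g_{n+1} = Φ(g_n). Then for every n ≥ 2 and all x, y ∈ [0,1]: |g_{n+1}(x,y) − g_n(x,y)| ≤ 4·ρⁿ·π(y)·‖g₁ − g₀‖_∞·∫*_{u=x}^{y} π(u) du, where ‖·‖_∞ denotes the supremum over [0,1]². In particular, the sequence (g_n) converges pointwise on [0,1]². -/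

import Mathlib

open MeasureTheory

/-- Circular integral: `∫*_{u=a}^{b} h(u) du` on the circle `[0,1)`.
It equals `∫_a^b h` if `a ≤ b` and `∫_a^1 h + ∫_0^b h` if `a > b`. -/
noncomputable def cint (a b : ℝ) (h : ℝ → ℝ) : ℝ :=
  if a ≤ b then ∫ u in a..b, h u
  else (∫ u in a..(1 : ℝ), h u) + ∫ u in (0 : ℝ)..b, h u

lemma II {f : ℝ → ℝ} (hf : Measurable f) {a b K : ℝ}
    (hsub : Set.uIcc a b ⊆ Set.Icc (0:ℝ) 1)
    (h : ∀ u ∈ Set.Icc (0:ℝ) 1, |f u| ≤ K) : IntervalIntegrable f volume a b := by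
  rw [intervalIntegrable_iff]
  refine Integrable.mono' (integrableOn_const (C := K) measure_Ioc_lt_top.ne)
    hf.aestronglyMeasurable ?_
  filter_upwards [ae_restrict_mem measurableSet_uIoc] with u hu
  exact h u (hsub (Set.uIoc_subset_uIcc hu))

lemma cint_bound {h : ℝ → ℝ} {x y K : ℝ} (hx : x ∈ Set.Icc (0:ℝ) 1)
    (hy : y ∈ Set.Icc (0:ℝ) 1) (hK : 0 ≤ K)
    (hb : ∀ u ∈ Set.Icc (0:ℝ) 1, |h u| ≤ K) : |cint x y h| ≤ K := by
  obtain ⟨hx0, hx1⟩ := hx; obtain ⟨hy0, hy1⟩ := hy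
  have key : ∀ a b : ℝ, 0 ≤ a → b ≤ 1 → a ≤ b → |∫ u in a..b, h u| ≤ K * (b - a) := by
    intro a b ha hb1 hab
    have := intervalIntegral.norm_integral_le_of_norm_le_const (a := a) (b := b) (C := K)
      (f := h) (fun u hu => by
        rw [Real.norm_eq_abs]
        rcases Set.mem_uIoc.1 hu with h' | h' <;>
          exact hb u ⟨by linarith [h'.1], by linarith [h'.2]⟩)
    rw [Real.norm_eq_abs, abs_of_nonneg (sub_nonneg.2 hab)] at this
    exact this
  unfold cint
  split_ifs with hxy
  · calc |∫ u in x..y, h u| ≤ K * (y - x) := key x y hx0 hy1 hxy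
      _ ≤ K := by nlinarith
  · push_neg at hxy
    have h1 := key x 1 hx0 le_rfl hx1
    have h2 := key 0 y le_rfl hy1 hy0
    calc |(∫ u in x..(1:ℝ), h u) + ∫ u in (0:ℝ)..y, h u|
        ≤ |∫ u in x..(1:ℝ), h u| + |∫ u in (0:ℝ)..y, h u| := abs_add_le _ _
      _ ≤ K * (1 - x) + K * (y - 0) := add_le_add h1 h2
      _ ≤ K := by nlinarith

lemma cint_mono {h1 h2 : ℝ → ℝ} {x y : ℝ} (hx : x ∈ Set.Icc (0:ℝ) 1)
    (hy : y ∈ Set.Icc (0:ℝ) 1)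
    (hi1 : ∀ a b : ℝ, Set.uIcc a b ⊆ Set.Icc (0:ℝ) 1 → IntervalIntegrable h1 volume a b)
    (hi2 : ∀ a b : ℝ, Set.uIcc a b ⊆ Set.Icc (0:ℝ) 1 → IntervalIntegrable h2 volume a b)
    (hle : ∀ u ∈ Set.Icc (0:ℝ) 1, h1 u ≤ h2 u) : cint x y h1 ≤ cint x y h2 := by
  obtain ⟨hx0, hx1⟩ := hx; obtain ⟨hy0, hy1⟩ := hy
  have sub1 : Set.uIcc x y ⊆ Set.Icc (0:ℝ) 1 := Set.uIcc_subset_Icc ⟨hx0,hx1⟩ ⟨hy0,hy1⟩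
  have sub2 : Set.uIcc x 1 ⊆ Set.Icc (0:ℝ) 1 := Set.uIcc_subset_Icc ⟨hx0,hx1⟩ (by norm_num)
  have sub3 : Set.uIcc (0:ℝ) y ⊆ Set.Icc (0:ℝ) 1 := Set.uIcc_subset_Icc (by norm_num) ⟨hy0,hy1⟩
  unfold cint
  split_ifs with hxy
  · exact intervalIntegral.integral_mono_on hxy (hi1 _ _ sub1) (hi2 _ _ sub1)
      (fun u hu => hle u (Set.Icc_subset_Icc hx0 hy1 hu))
  · push_neg at hxy
    exact add_le_add
      (intervalIntegral.integral_mono_on hx1 (hi1 _ _ sub2) (hi2 _ _ sub2)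
        (fun u hu => hle u ⟨le_trans hx0 hu.1, hu.2⟩))
      (intervalIntegral.integral_mono_on hy0 (hi1 _ _ sub3) (hi2 _ _ sub3)
        (fun u hu => hle u ⟨hu.1, le_trans hu.2 hy1⟩))

lemma cint_sub {h1 h2 : ℝ → ℝ} {x y : ℝ}
    (hi1 : ∀ a b : ℝ, Set.uIcc a b ⊆ Set.Icc (0:ℝ) 1 → IntervalIntegrable h1 volume a b)
    (hi2 : ∀ a b : ℝ, Set.uIcc a b ⊆ Set.Icc (0:ℝ) 1 → IntervalIntegrable h2 volume a b)
    (hx : x ∈ Set.Icc (0:ℝ) 1) (hy : y ∈ Set.Icc (0:ℝ) 1) :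
    cint x y (fun u => h1 u - h2 u) = cint x y h1 - cint x y h2 := by
  obtain ⟨hx0, hx1⟩ := hx; obtain ⟨hy0, hy1⟩ := hy
  have sub1 : Set.uIcc x y ⊆ Set.Icc (0:ℝ) 1 := Set.uIcc_subset_Icc ⟨hx0,hx1⟩ ⟨hy0,hy1⟩
  have sub2 : Set.uIcc x 1 ⊆ Set.Icc (0:ℝ) 1 := Set.uIcc_subset_Icc ⟨hx0,hx1⟩ (by norm_num)
  have sub3 : Set.uIcc (0:ℝ) y ⊆ Set.Icc (0:ℝ) 1 := Set.uIcc_subset_Icc (by norm_num) ⟨hy0,hy1⟩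
  unfold cint
  split_ifs with hxy
  · exact intervalIntegral.integral_sub (hi1 _ _ sub1) (hi2 _ _ sub1)
  · rw [intervalIntegral.integral_sub (hi1 _ _ sub2) (hi2 _ _ sub2),
      intervalIntegral.integral_sub (hi1 _ _ sub3) (hi2 _ _ sub3)]
    ring

lemma cint_const_mul (x y c : ℝ) (h : ℝ → ℝ) :
    cint x y (fun u => c * h u) = c * cint x y h := by
  unfold cint
  split_ifs with hxy
  · rw [intervalIntegral.integral_const_mul]
  · rw [intervalIntegral.integral_const_mul, intervalIntegral.integral_const_mul]
    ring

lemma cint_abs_le {h h' : ℝ → ℝ} {x y : ℝ} (hx : x ∈ Set.Icc (0:ℝ) 1)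
    (hy : y ∈ Set.Icc (0:ℝ) 1)
    (hih : ∀ a b : ℝ, Set.uIcc a b ⊆ Set.Icc (0:ℝ) 1 → IntervalIntegrable h volume a b)
    (hih' : ∀ a b : ℝ, Set.uIcc a b ⊆ Set.Icc (0:ℝ) 1 → IntervalIntegrable h' volume a b)
    (hle : ∀ u ∈ Set.Icc (0:ℝ) 1, |h u| ≤ h' u) : |cint x y h| ≤ cint x y h' := by
  obtain ⟨hx0, hx1⟩ := hx; obtain ⟨hy0, hy1⟩ := hy
  have key : ∀ a b : ℝ, 0 ≤ a → b ≤ 1 → a ≤ b →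
      |∫ u in a..b, h u| ≤ ∫ u in a..b, h' u := by
    intro a b ha hb1 hab
    have sub : Set.uIcc a b ⊆ Set.Icc (0:ℝ) 1 :=
      Set.uIcc_subset_Icc ⟨ha, le_trans hab hb1⟩ ⟨le_trans ha hab, hb1⟩
    calc |∫ u in a..b, h u| ≤ ∫ u in a..b, |h u| :=
          intervalIntegral.abs_integral_le_integral_abs hab
      _ ≤ ∫ u in a..b, h' u := by
          apply intervalIntegral.integral_mono_on hab ((hih _ _ sub).abs) (hih' _ _ sub)
          intro u hu
          exact hle u ⟨le_trans ha hu.1, le_trans hu.2 hb1⟩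
  unfold cint
  split_ifs with hxy
  · exact key x y hx0 hy1 hxy
  · push_neg at hxy
    calc |(∫ u in x..(1:ℝ), h u) + ∫ u in (0:ℝ)..y, h u|
        ≤ |∫ u in x..(1:ℝ), h u| + |∫ u in (0:ℝ)..y, h u| := abs_add_le _ _
      _ ≤ (∫ u in x..(1:ℝ), h' u) + ∫ u in (0:ℝ)..y, h' u :=
          add_le_add (key x 1 hx0 le_rfl hx1) (key 0 y le_rfl hy1 hy0)

lemma half_square {f : ℝ → ℝ} (hf : Measurable f) {a b K : ℝ} (hab : a ≤ b)
    (ha : 0 ≤ a) (hb1 : b ≤ 1) (hK : ∀ u ∈ Set.Icc (0:ℝ) 1, |f u| ≤ K) :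
    (∫ u in a..b, f u * (∫ v in a..u, f v)) = (∫ u in a..b, f u) ^ 2 / 2 := by
  set μ := volume.restrict (Set.Ioc a b) with hμ
  have hfin : IsFiniteMeasure μ := ⟨by
    rw [Measure.restrict_apply_univ]; exact measure_Ioc_lt_top⟩
  set F : ℝ × ℝ → ℝ := fun p => if p.2 ≤ p.1 then f p.1 * f p.2 else 0 with hF
  have hFmeas : Measurable F := by
    apply Measurable.ite (measurableSet_le measurable_snd measurable_fst)
    · exact (hf.comp measurable_fst).mul (hf.comp measurable_snd)
    · exact measurable_const
  have hsub : Set.Ioc a b ⊆ Set.Icc (0:ℝ) 1 := fun u hu => ⟨le_trans ha hu.1.le, le_trans hu.2 hb1⟩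
  -- integrability of F on product
  have hprod : μ.prod μ = (volume.prod volume).restrict (Set.Ioc a b ×ˢ Set.Ioc a b) :=
    Measure.prod_restrict _ _
  have hmem : ∀ᵐ p ∂(μ.prod μ), p ∈ Set.Ioc a b ×ˢ Set.Ioc a b := by
    rw [hprod]; exact ae_restrict_mem (measurableSet_Ioc.prod measurableSet_Ioc)
  have hFint : Integrable F (μ.prod μ) := by
    refine Integrable.mono' (integrable_const (K * K)) hFmeas.aestronglyMeasurable ?_
    filter_upwards [hmem] with p hp
    simp only [Real.norm_eq_abs, hF]
    have h1 := hK p.1 (hsub hp.1)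
    have h2 := hK p.2 (hsub hp.2)
    have habs : (0:ℝ) ≤ |f p.1| := abs_nonneg _
    split_ifs
    · rw [abs_mul]; exact mul_le_mul h1 h2 (abs_nonneg _) (le_trans habs h1)
    · simpa using mul_nonneg (le_trans habs h1) (le_trans (abs_nonneg (f p.2)) h2)
  -- each slice is integrable
  have hslice1 : ∀ u : ℝ, Integrable (fun v => F (u, v)) μ := by
    intro u
    refine Integrable.mono' (integrable_const (|f u| * K)) ?_ ?_
    · exact (hFmeas.comp (measurable_const.prodMk measurable_id)).aestronglyMeasurable
    · filter_upwards [ae_restrict_mem measurableSet_Ioc] with v hv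
      simp only [Real.norm_eq_abs, hF]
      split_ifs
      · rw [abs_mul]
        exact mul_le_mul_of_nonneg_left (hK v (hsub hv)) (abs_nonneg _)
      · simpa using mul_nonneg (abs_nonneg (f u)) (le_trans (abs_nonneg (f v)) (hK v (hsub hv)))
  have hslice2 : ∀ u : ℝ, Integrable (fun v => F (v, u)) μ := by
    intro u
    refine Integrable.mono' (integrable_const (K * |f u|)) ?_ ?_
    · exact (hFmeas.comp (measurable_id.prodMk measurable_const)).aestronglyMeasurable
    · filter_upwards [ae_restrict_mem measurableSet_Ioc] with v hv
      simp only [Real.norm_eq_abs, hF]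
      split_ifs
      · rw [abs_mul]
        exact mul_le_mul_of_nonneg_right (hK v (hsub hv)) (abs_nonneg _)
      · simpa using mul_nonneg (le_trans (abs_nonneg (f v)) (hK v (hsub hv))) (abs_nonneg (f u))
  have hfint : Integrable f μ := by
    refine Integrable.mono' (integrable_const K) hf.aestronglyMeasurable ?_
    filter_upwards [ae_restrict_mem measurableSet_Ioc] with v hv
    exact hK v (hsub hv)
  set c := ∫ u, f u ∂μ with hc
  set I := ∫ u, ∫ v, F (u, v) ∂μ ∂μ with hI
  -- step: swap
  have hswap : I = ∫ u, ∫ v, F (v, u) ∂μ ∂μ := integral_integral_swap hFint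
  -- diagonal integral vanishes
  have hne : ∀ u : ℝ, ∀ᵐ v ∂μ, v ≠ u := by
    intro u
    have h0 : μ {u} = 0 := by
      rw [hμ, Measure.restrict_apply (measurableSet_singleton u)]
      exact measure_mono_null Set.inter_subset_left (measure_singleton u)
    rw [ae_iff]
    convert h0 using 2
    ext v; simp [not_ne_iff]
  have hdiag0 : ∀ u : ℝ, (fun v => if v = u then f u * f v else 0) =ᵐ[μ] fun _ => (0:ℝ) := by
    intro u
    filter_upwards [hne u] with v hv
    rw [if_neg hv]
  have hdiag : ∀ u : ℝ, (∫ v, (if v = u then f u * f v else 0) ∂μ) = 0 := by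
    intro u
    rw [integral_congr_ae (hdiag0 u), integral_zero]
  -- pointwise sum identity
  have hpt : ∀ u v : ℝ, F (u, v) + F (v, u)
      = f u * f v + (if v = u then f u * f v else 0) := by
    intro u v
    simp only [hF]
    rcases lt_trichotomy u v with h | h | h
    · rw [if_neg (by linarith), if_pos h.le, if_neg (by intro e; exact absurd e (ne_of_gt h))]
      ring
    · subst h; simp
    · rw [if_pos h.le, if_neg (by linarith), if_neg (by intro e; exact absurd e (ne_of_lt h))]
  -- double integral of the sum, two ways
  have hIA : Integrable (fun u => ∫ v, F (u, v) ∂μ) μ := hFint.integral_prod_left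
  have hIB : Integrable (fun u => ∫ v, F (v, u) ∂μ) μ := hFint.integral_prod_right
  have hsum1 : ∫ u, ∫ v, (F (u, v) + F (v, u)) ∂μ ∂μ = I + I := by
    have inner : ∀ u : ℝ, ∫ v, (F (u, v) + F (v, u)) ∂μ
        = (∫ v, F (u, v) ∂μ) + ∫ v, F (v, u) ∂μ := fun u =>
      integral_add (hslice1 u) (hslice2 u)
    rw [integral_congr_ae (Filter.Eventually.of_forall inner), integral_add hIA hIB,
      ← hI, ← hswap]
  have hsum2 : ∫ u, ∫ v, (F (u, v) + F (v, u)) ∂μ ∂μ = c * c := by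
    have inner : ∀ u : ℝ, ∫ v, (F (u, v) + F (v, u)) ∂μ = f u * c := by
      intro u
      have hdint : Integrable (fun v => if v = u then f u * f v else 0) μ :=
        (integrable_zero _ _ _).congr (hdiag0 u).symm
      calc ∫ v, (F (u, v) + F (v, u)) ∂μ
          = ∫ v, (f u * f v + if v = u then f u * f v else 0) ∂μ := by
            exact integral_congr_ae (Filter.Eventually.of_forall (fun v => hpt u v))
        _ = (∫ v, f u * f v ∂μ) + ∫ v, (if v = u then f u * f v else 0) ∂μ :=
            integral_add (hfint.const_mul _) hdint
        _ = f u * c + 0 := by rw [integral_const_mul, hdiag u, hc]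
        _ = f u * c := add_zero _
    rw [integral_congr_ae (Filter.Eventually.of_forall inner)]
    rw [show (fun u => f u * c) = fun u => c * f u from funext fun u => mul_comm _ _]
    rw [integral_const_mul, ← hc, mul_comm]
  have hI2 : I = c ^ 2 / 2 := by
    have : I + I = c * c := by rw [← hsum1, hsum2]
    nlinarith [this]
  -- translate back to interval integrals
  have hcint : (∫ u in a..b, f u) = c := by
    rw [intervalIntegral.integral_of_le hab, hc]
  rw [hcint, ← hI2, hI, intervalIntegral.integral_of_le hab]
  refine setIntegral_congr_fun measurableSet_Ioc (fun u hu => ?_)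
  have hcalc : ∫ v, F (u, v) ∂μ = f u * ∫ v in a..u, f v := by
    have e1 : (fun v => F (u, v)) = fun v => (Set.Iic u).indicator (fun v => f u * f v) v := by
      funext v
      simp only [hF, Set.indicator_apply, Set.mem_Iic]
    rw [e1, hμ, setIntegral_indicator measurableSet_Iic, Set.Ioc_inter_Iic,
      min_eq_right hu.2, integral_const_mul, intervalIntegral.integral_of_le hu.1.le]
  rw [hcalc]
lemma measurable_setIntegral_Ioc {α : Type*} [MeasurableSpace α] {H : α → ℝ → ℝ}
    {e1 e2 : α → ℝ} (hH : Measurable (fun q : α × ℝ => H q.1 q.2))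
    (h1 : Measurable e1) (h2 : Measurable e2) :
    Measurable (fun p => ∫ v in Set.Ioc (e1 p) (e2 p), H p v) := by
  have key : ∀ p, (∫ v in Set.Ioc (e1 p) (e2 p), H p v)
      = ∫ v, (if e1 p < v ∧ v ≤ e2 p then H p v else 0) := by
    intro p
    rw [← integral_indicator measurableSet_Ioc]
    congr 1
    funext v
    simp only [Set.indicator_apply, Set.mem_Ioc]
  simp only [key]
  have hK : Measurable (fun q : α × ℝ => if e1 q.1 < q.2 ∧ q.2 ≤ e2 q.1 then H q.1 q.2 else 0) := by
    apply Measurable.ite _ hH measurable_const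
    exact ((measurableSet_lt (h1.comp measurable_fst) measurable_snd).inter
      (measurableSet_le measurable_snd (h2.comp measurable_fst)))
  exact hK.stronglyMeasurable.integral_prod_right'.measurable

lemma measurable_intervalIntegral {α : Type*} [MeasurableSpace α] {H : α → ℝ → ℝ}
    {e1 e2 : α → ℝ} (hH : Measurable (fun q : α × ℝ => H q.1 q.2))
    (h1 : Measurable e1) (h2 : Measurable e2) :
    Measurable (fun p => ∫ v in (e1 p)..(e2 p), H p v) := by
  have : ∀ p, (∫ v in (e1 p)..(e2 p), H p v)
      = (∫ v in Set.Ioc (e1 p) (e2 p), H p v) - ∫ v in Set.Ioc (e2 p) (e1 p), H p v := by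
    intro p; rfl
  simp only [this]
  exact (measurable_setIntegral_Ioc hH h1 h2).sub (measurable_setIntegral_Ioc hH h2 h1)

lemma measurable_cint {α : Type*} [MeasurableSpace α] {H : α → ℝ → ℝ}
    {e1 e2 : α → ℝ} (hH : Measurable (fun q : α × ℝ => H q.1 q.2))
    (h1 : Measurable e1) (h2 : Measurable e2) :
    Measurable (fun p => cint (e1 p) (e2 p) (H p)) := by
  unfold cint
  apply Measurable.ite (measurableSet_le h1 h2)
  · exact measurable_intervalIntegral hH h1 h2
  · exact (measurable_intervalIntegral hH h1 measurable_const).add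
      (measurable_intervalIntegral hH measurable_const h2)

lemma measurable_primitive {f : ℝ → ℝ} (hf : Measurable f) (x : ℝ) :
    Measurable (fun u => ∫ v in x..u, f v) :=
  measurable_intervalIntegral (H := fun _ v => f v) (hf.comp measurable_snd)
    measurable_const measurable_id
section KEY
variable {π : ℝ → ℝ} {Mp : ℝ}

lemma cint_of_le {a b : ℝ} (h : a ≤ b) (f : ℝ → ℝ) :
    cint a b f = ∫ u in a..b, f u := if_pos h

lemma cint_of_gt {a b : ℝ} (h : b < a) (f : ℝ → ℝ) :
    cint a b f = (∫ u in a..(1:ℝ), f u) + ∫ u in (0:ℝ)..b, f u := if_neg (not_le.2 h)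

lemma primitive_bound {f : ℝ → ℝ} {K : ℝ} (hK : 0 ≤ K)
    (hb : ∀ u ∈ Set.Icc (0:ℝ) 1, |f u| ≤ K) {x u : ℝ}
    (hx : x ∈ Set.Icc (0:ℝ) 1) (hu : u ∈ Set.Icc (0:ℝ) 1) :
    |∫ v in x..u, f v| ≤ K := by
  have := intervalIntegral.norm_integral_le_of_norm_le_const (a := x) (b := u) (C := K)
    (f := f) (fun v hv => by
      rw [Real.norm_eq_abs]
      rcases Set.mem_uIoc.1 hv with h' | h' <;>
        exact hb v ⟨by rcases hx with ⟨a1,a2⟩; rcases hu with ⟨b1,b2⟩; linarith [h'.1],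
          by rcases hx with ⟨a1,a2⟩; rcases hu with ⟨b1,b2⟩; linarith [h'.2]⟩)
  rw [Real.norm_eq_abs] at this
  refine le_trans this ?_
  have : |u - x| ≤ 1 := by
    rw [abs_le]; rcases hx with ⟨a1,a2⟩; rcases hu with ⟨b1,b2⟩; constructor <;> linarith
  nlinarith [abs_nonneg (u - x)]

lemma cint_key (hm : Measurable π)
    (hnn : ∀ u ∈ Set.Icc (0:ℝ) 1, 0 ≤ π u)
    (hbd : ∀ u ∈ Set.Icc (0:ℝ) 1, π u ≤ Mp)
    (hint : (∫ u in (0:ℝ)..1, π u) = 1)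
    {x y : ℝ} (hx : x ∈ Set.Icc (0:ℝ) 1) (hy : y ∈ Set.Icc (0:ℝ) 1) :
    cint x y (fun u => π u * (cint x u π + cint y u π)) = cint x y π := by
  obtain ⟨hx0, hx1⟩ := hx; obtain ⟨hy0, hy1⟩ := hy
  have hb' : ∀ u ∈ Set.Icc (0:ℝ) 1, |π u| ≤ Mp := fun u hu => by
    rw [abs_of_nonneg (hnn u hu)]; exact hbd u hu
  have hK0 : (0:ℝ) ≤ Mp :=
    le_trans (hnn 0 ⟨le_rfl, zero_le_one⟩) (hbd 0 ⟨le_rfl, zero_le_one⟩)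
  have hii : ∀ a b : ℝ, Set.uIcc a b ⊆ Set.Icc (0:ℝ) 1 → IntervalIntegrable π volume a b :=
    fun a b h => II hm h hb'
  have hay : ∀ᵐ u : ℝ, u ≠ y := by
    rw [ae_iff]
    have : {u : ℝ | ¬ u ≠ y} = {y} := by ext v; simp [not_ne_iff]
    rw [this]
    exact measure_singleton y
  rcases le_or_gt x y with hxy | hxy
  · -- direct case
    rw [cint_of_le hxy, cint_of_le hxy]
    have hP : (∫ u in (0:ℝ)..x, π u) + ((∫ u in x..y, π u) + ∫ u in y..(1:ℝ), π u) = 1 := by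
      rw [intervalIntegral.integral_add_adjacent_intervals
          (hii x y (Set.uIcc_subset_Icc ⟨hx0,hx1⟩ ⟨hy0,hy1⟩))
          (hii y 1 (Set.uIcc_subset_Icc ⟨hy0,hy1⟩ (by norm_num))),
        intervalIntegral.integral_add_adjacent_intervals
          (hii 0 x (Set.uIcc_subset_Icc (by norm_num) ⟨hx0,hx1⟩))
          (hii x 1 (Set.uIcc_subset_Icc ⟨hx0,hx1⟩ (by norm_num))), hint]
    set P0x := ∫ u in (0:ℝ)..x, π u
    set Pxy := ∫ u in x..y, π u
    set Py1 := ∫ u in y..(1:ℝ), π u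
    have step1 : (∫ u in x..y, π u * (cint x u π + cint y u π))
        = ∫ u in x..y, ((π u * (∫ v in x..u, π v) + π u * (∫ v in x..u, π v))
            + ((Py1 + P0x) * π u)) := by
      apply intervalIntegral.integral_congr_ae
      filter_upwards [hay] with u huy hu
      rw [Set.uIoc_of_le hxy] at hu
      have hu01 : u ∈ Set.Icc (0:ℝ) 1 := ⟨le_trans hx0 hu.1.le, le_trans hu.2 hy1⟩
      have h1 : cint x u π = ∫ v in x..u, π v := cint_of_le hu.1.le π
      have h2 : cint y u π = Py1 + ∫ v in (0:ℝ)..u, π v :=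
        cint_of_gt (lt_of_le_of_ne hu.2 huy) π
      have h3 : P0x + (∫ v in x..u, π v) = ∫ v in (0:ℝ)..u, π v :=
        intervalIntegral.integral_add_adjacent_intervals
          (hii 0 x (Set.uIcc_subset_Icc (by norm_num) ⟨hx0,hx1⟩))
          (hii x u (Set.uIcc_subset_Icc ⟨hx0,hx1⟩ hu01))
      rw [h1, h2, ← h3]
      ring
    have hiA1 : IntervalIntegrable (fun u => π u * (∫ v in x..u, π v)) volume x y := by
      apply II (hm.mul (measurable_primitive hm x))
        (Set.uIcc_subset_Icc ⟨hx0,hx1⟩ ⟨hy0,hy1⟩)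
      intro u hu
      rw [Pi.mul_apply, abs_mul]
      exact mul_le_mul (hb' u hu) (primitive_bound hK0 hb' ⟨hx0,hx1⟩ hu)
        (abs_nonneg _) hK0
    have hiA : IntervalIntegrable (fun u => π u * (∫ v in x..u, π v) +
        π u * (∫ v in x..u, π v)) volume x y := hiA1.add hiA1
    have hiB : IntervalIntegrable (fun u => (Py1 + P0x) * π u) volume x y :=
      (hii x y (Set.uIcc_subset_Icc ⟨hx0,hx1⟩ ⟨hy0,hy1⟩)).const_mul _
    have hhalf : (∫ u in x..y, π u * (∫ v in x..u, π v)) = Pxy ^ 2 / 2 :=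
      half_square hm hxy hx0 hy1 hb'
    rw [step1, intervalIntegral.integral_add hiA hiB,
      intervalIntegral.integral_add hiA1 hiA1, hhalf,
      intervalIntegral.integral_const_mul]
    linear_combination Pxy * hP
  · -- wrap-around case
    rw [cint_of_gt hxy, cint_of_gt hxy]
    have hP : (∫ u in (0:ℝ)..y, π u) + ((∫ u in y..x, π u) + ∫ u in x..(1:ℝ), π u) = 1 := by
      rw [intervalIntegral.integral_add_adjacent_intervals
          (hii y x (Set.uIcc_subset_Icc ⟨hy0,hy1⟩ ⟨hx0,hx1⟩))
          (hii x 1 (Set.uIcc_subset_Icc ⟨hx0,hx1⟩ (by norm_num))),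
        intervalIntegral.integral_add_adjacent_intervals
          (hii 0 y (Set.uIcc_subset_Icc (by norm_num) ⟨hy0,hy1⟩))
          (hii y 1 (Set.uIcc_subset_Icc ⟨hy0,hy1⟩ (by norm_num))), hint]
    set P0y := ∫ u in (0:ℝ)..y, π u with hP0y
    set Pyx := ∫ u in y..x, π u with hPyx
    set Px1 := ∫ u in x..(1:ℝ), π u with hPx1
    have hPy1 : (∫ u in y..(1:ℝ), π u) = Pyx + Px1 := by
      rw [← intervalIntegral.integral_add_adjacent_intervals
          (hii y x (Set.uIcc_subset_Icc ⟨hy0,hy1⟩ ⟨hx0,hx1⟩))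
          (hii x 1 (Set.uIcc_subset_Icc ⟨hx0,hx1⟩ (by norm_num)))]
    -- first piece
    have step1 : (∫ u in x..(1:ℝ), π u * (cint x u π + cint y u π))
        = ∫ u in x..(1:ℝ), ((π u * (∫ v in x..u, π v) + π u * (∫ v in x..u, π v))
            + (Pyx * π u)) := by
      apply intervalIntegral.integral_congr
      intro u hu
      rw [Set.uIcc_of_le hx1] at hu
      have hu01 : u ∈ Set.Icc (0:ℝ) 1 := ⟨le_trans hx0 hu.1, hu.2⟩
      have h1 : cint x u π = ∫ v in x..u, π v := cint_of_le hu.1 π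
      have h2 : cint y u π = ∫ v in y..u, π v := cint_of_le (le_trans hxy.le hu.1) π
      have h3 : Pyx + (∫ v in x..u, π v) = ∫ v in y..u, π v :=
        intervalIntegral.integral_add_adjacent_intervals
          (hii y x (Set.uIcc_subset_Icc ⟨hy0,hy1⟩ ⟨hx0,hx1⟩))
          (hii x u (Set.uIcc_subset_Icc ⟨hx0,hx1⟩ hu01))
      simp only
      rw [h1, h2, ← h3]
      ring
    -- second piece
    have step2 : (∫ u in (0:ℝ)..y, π u * (cint x u π + cint y u π))
        = ∫ u in (0:ℝ)..y, ((π u * (∫ v in (0:ℝ)..u, π v) + π u * (∫ v in (0:ℝ)..u, π v))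
            + ((Px1 + (Pyx + Px1)) * π u)) := by
      apply intervalIntegral.integral_congr_ae
      filter_upwards [hay] with u huy hu
      rw [Set.uIoc_of_le hy0] at hu
      have huy' : u < y := lt_of_le_of_ne hu.2 huy
      have h1 : cint x u π = Px1 + ∫ v in (0:ℝ)..u, π v :=
        cint_of_gt (lt_trans huy' hxy) π
      have h2 : cint y u π = (∫ v in y..(1:ℝ), π v) + ∫ v in (0:ℝ)..u, π v :=
        cint_of_gt huy' π
      rw [h1, h2, hPy1]
      ring
    have hiA1 : IntervalIntegrable (fun u => π u * (∫ v in x..u, π v)) volume x 1 := by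
      apply II (hm.mul (measurable_primitive hm x))
        (Set.uIcc_subset_Icc ⟨hx0,hx1⟩ (by norm_num))
      intro u hu
      rw [Pi.mul_apply, abs_mul]
      exact mul_le_mul (hb' u hu) (primitive_bound hK0 hb' ⟨hx0,hx1⟩ hu)
        (abs_nonneg _) hK0
    have hiA2 : IntervalIntegrable (fun u => π u * (∫ v in (0:ℝ)..u, π v)) volume 0 y := by
      apply II (hm.mul (measurable_primitive hm 0))
        (Set.uIcc_subset_Icc (by norm_num) ⟨hy0,hy1⟩)
      intro u hu
      rw [Pi.mul_apply, abs_mul]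
      exact mul_le_mul (hb' u hu) (primitive_bound hK0 hb' (by norm_num) hu)
        (abs_nonneg _) hK0
    have hiB1 : IntervalIntegrable (fun u => Pyx * π u) volume x 1 :=
      (hii x 1 (Set.uIcc_subset_Icc ⟨hx0,hx1⟩ (by norm_num))).const_mul _
    have hiB2 : IntervalIntegrable (fun u => (Px1 + (Pyx + Px1)) * π u) volume 0 y :=
      (hii 0 y (Set.uIcc_subset_Icc (by norm_num) ⟨hy0,hy1⟩)).const_mul _
    have hhalf1 : (∫ u in x..(1:ℝ), π u * (∫ v in x..u, π v)) = Px1 ^ 2 / 2 :=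
      half_square hm hx1 hx0 le_rfl hb'
    have hhalf2 : (∫ u in (0:ℝ)..y, π u * (∫ v in (0:ℝ)..u, π v)) = P0y ^ 2 / 2 :=
      half_square hm hy0 le_rfl hy1 hb'
    rw [step1, step2, intervalIntegral.integral_add (hiA1.add hiA1) hiB1,
      intervalIntegral.integral_add (hiA2.add hiA2) hiB2,
      intervalIntegral.integral_add hiA1 hiA1,
      intervalIntegral.integral_add hiA2 hiA2, hhalf1, hhalf2,
      intervalIntegral.integral_const_mul, intervalIntegral.integral_const_mul]
    linear_combination (Px1 + P0y) * hP
end KEY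

lemma cint_nonneg {h : ℝ → ℝ} {x y : ℝ} (hx : x ∈ Set.Icc (0:ℝ) 1)
    (hy : y ∈ Set.Icc (0:ℝ) 1) (hnn : ∀ u ∈ Set.Icc (0:ℝ) 1, 0 ≤ h u) :
    0 ≤ cint x y h := by
  obtain ⟨hx0, hx1⟩ := hx; obtain ⟨hy0, hy1⟩ := hy
  unfold cint
  split_ifs with hxy
  · exact intervalIntegral.integral_nonneg hxy
      (fun u hu => hnn u ⟨le_trans hx0 hu.1, le_trans hu.2 hy1⟩)
  · exact add_nonneg
      (intervalIntegral.integral_nonneg hx1 (fun u hu => hnn u ⟨le_trans hx0 hu.1, hu.2⟩))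
      (intervalIntegral.integral_nonneg hy0 (fun u hu => hnn u ⟨hu.1, le_trans hu.2 hy1⟩))

lemma cint_le_one {π : ℝ → ℝ} {Mp : ℝ} (hm : Measurable π)
    (hnn : ∀ u ∈ Set.Icc (0:ℝ) 1, 0 ≤ π u)
    (hbd : ∀ u ∈ Set.Icc (0:ℝ) 1, |π u| ≤ Mp)
    (hint : (∫ u in (0:ℝ)..1, π u) = 1)
    {x y : ℝ} (hx : x ∈ Set.Icc (0:ℝ) 1) (hy : y ∈ Set.Icc (0:ℝ) 1) :
    cint x y π ≤ 1 := by
  obtain ⟨hx0, hx1⟩ := hx; obtain ⟨hy0, hy1⟩ := hy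
  have hii : ∀ a b : ℝ, Set.uIcc a b ⊆ Set.Icc (0:ℝ) 1 → IntervalIntegrable π volume a b :=
    fun a b h => II hm h hbd
  unfold cint
  split_ifs with hxy
  · have hP : (∫ u in (0:ℝ)..x, π u) + ((∫ u in x..y, π u) + ∫ u in y..(1:ℝ), π u) = 1 := by
      rw [intervalIntegral.integral_add_adjacent_intervals
          (hii x y (Set.uIcc_subset_Icc ⟨hx0,hx1⟩ ⟨hy0,hy1⟩))
          (hii y 1 (Set.uIcc_subset_Icc ⟨hy0,hy1⟩ (by norm_num))),
        intervalIntegral.integral_add_adjacent_intervals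
          (hii 0 x (Set.uIcc_subset_Icc (by norm_num) ⟨hx0,hx1⟩))
          (hii x 1 (Set.uIcc_subset_Icc ⟨hx0,hx1⟩ (by norm_num))), hint]
    have n1 : 0 ≤ ∫ u in (0:ℝ)..x, π u :=
      intervalIntegral.integral_nonneg hx0 (fun u hu => hnn u ⟨hu.1, le_trans hu.2 hx1⟩)
    have n2 : 0 ≤ ∫ u in y..(1:ℝ), π u :=
      intervalIntegral.integral_nonneg hy1 (fun u hu => hnn u ⟨le_trans hy0 hu.1, hu.2⟩)
    linarith
  · push_neg at hxy
    have hP : (∫ u in (0:ℝ)..y, π u) + ((∫ u in y..x, π u) + ∫ u in x..(1:ℝ), π u) = 1 := by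
      rw [intervalIntegral.integral_add_adjacent_intervals
          (hii y x (Set.uIcc_subset_Icc ⟨hy0,hy1⟩ ⟨hx0,hx1⟩))
          (hii x 1 (Set.uIcc_subset_Icc ⟨hx0,hx1⟩ (by norm_num))),
        intervalIntegral.integral_add_adjacent_intervals
          (hii 0 y (Set.uIcc_subset_Icc (by norm_num) ⟨hy0,hy1⟩))
          (hii y 1 (Set.uIcc_subset_Icc ⟨hy0,hy1⟩ (by norm_num))), hint]
    have n1 : 0 ≤ ∫ u in y..x, π u :=
      intervalIntegral.integral_nonneg hxy.le
        (fun u hu => hnn u ⟨le_trans hy0 hu.1, le_trans hu.2 hx1⟩)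
    linarith

/-- Geometric contraction of the successive-substitution iteration
`g_{n+1}(x,y) = ρ·π(y)·∫*_{u=x}^{y} [g_n(x,u) + g_n(y,u)] du + b(x,y)`:
for `n ≥ 2`, `|g_{n+1} − g_n| ≤ 4ρⁿ·π(y)·‖g₁ − g₀‖_∞·∫*_{u=x}^{y} π(u) du`,
and consequently the sequence converges pointwise on `[0,1]²`. -/
theorem successive_substitution_contracts_and_converges
    (ρ : ℝ) (hρ : ρ ∈ Set.Ioo (0 : ℝ) 1)
    (π : ℝ → ℝ) (hπmeas : Measurable π)
    (hπnn : ∀ x ∈ Set.Icc (0 : ℝ) 1, 0 ≤ π x)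
    (hπbd : ∃ M : ℝ, ∀ x ∈ Set.Icc (0 : ℝ) 1, π x ≤ M)
    (hπint : (∫ u in (0 : ℝ)..1, π u) = 1)
    (b : ℝ → ℝ → ℝ)
    (hbmeas : Measurable (Function.uncurry b))
    (hbbd : ∃ M : ℝ, ∀ x ∈ Set.Icc (0 : ℝ) 1, ∀ y ∈ Set.Icc (0 : ℝ) 1, |b x y| ≤ M)
    (g : ℕ → ℝ → ℝ → ℝ)
    (hg0meas : Measurable (Function.uncurry (g 0)))
    (hg0bd : ∃ M : ℝ, ∀ x ∈ Set.Icc (0 : ℝ) 1, ∀ y ∈ Set.Icc (0 : ℝ) 1, |g 0 x y| ≤ M)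
    (hgrec : ∀ (n : ℕ) (x y : ℝ),
      g (n + 1) x y = ρ * π y * cint x y (fun u => g n x u + g n y u) + b x y)
    (M : ℝ)
    (hM : M = ⨆ q : Set.Icc (0 : ℝ) 1 × Set.Icc (0 : ℝ) 1,
      |g 1 (q.1 : ℝ) (q.2 : ℝ) - g 0 (q.1 : ℝ) (q.2 : ℝ)|) :
    (∀ n : ℕ, 2 ≤ n → ∀ x ∈ Set.Icc (0 : ℝ) 1, ∀ y ∈ Set.Icc (0 : ℝ) 1,
      |g (n + 1) x y - g n x y| ≤ 4 * ρ ^ n * π y * M * cint x y π) ∧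
    (∀ x ∈ Set.Icc (0 : ℝ) 1, ∀ y ∈ Set.Icc (0 : ℝ) 1,
      ∃ L : ℝ, Filter.Tendsto (fun n => g n x y) Filter.atTop (nhds L)) := by
  obtain ⟨hρ0, hρ1⟩ := hρ
  obtain ⟨Mp, hMp⟩ := hπbd
  have hK0 : (0:ℝ) ≤ Mp :=
    le_trans (hπnn 0 ⟨le_rfl, zero_le_one⟩) (hMp 0 ⟨le_rfl, zero_le_one⟩)
  have hb' : ∀ u ∈ Set.Icc (0:ℝ) 1, |π u| ≤ Mp := fun u hu => by
    rw [abs_of_nonneg (hπnn u hu)]; exact hMp u hu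
  have hii : ∀ a b : ℝ, Set.uIcc a b ⊆ Set.Icc (0:ℝ) 1 → IntervalIntegrable π volume a b :=
    fun a b h => II hπmeas h hb'
  obtain ⟨Mb, hMb⟩ := hbbd
  have hMb0 : (0:ℝ) ≤ Mb := le_trans (abs_nonneg _)
    (hMb 0 ⟨le_rfl, zero_le_one⟩ 0 ⟨le_rfl, zero_le_one⟩)
  -- measurability and boundedness of all iterates
  have hgm : ∀ n : ℕ, Measurable (Function.uncurry (g n)) ∧
      ∃ B : ℝ, 0 ≤ B ∧ ∀ x ∈ Set.Icc (0:ℝ) 1, ∀ y ∈ Set.Icc (0:ℝ) 1, |g n x y| ≤ B := by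
    intro n
    induction n with
    | zero =>
      obtain ⟨B0, hB0⟩ := hg0bd
      exact ⟨hg0meas, B0, le_trans (abs_nonneg _)
        (hB0 0 ⟨le_rfl, zero_le_one⟩ 0 ⟨le_rfl, zero_le_one⟩), hB0⟩
    | succ n ih =>
      obtain ⟨ihm, B, hB0, hB⟩ := ih
      constructor
      · have : Function.uncurry (g (n+1)) = fun p : ℝ × ℝ =>
            ρ * π p.2 * cint p.1 p.2 (fun u => g n p.1 u + g n p.2 u) + b p.1 p.2 := by
          funext p
          exact hgrec n p.1 p.2
        rw [this]
        have hH : Measurable (fun q : (ℝ × ℝ) × ℝ => g n q.1.1 q.2 + g n q.1.2 q.2) := by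
          have h1 : Measurable (fun q : (ℝ × ℝ) × ℝ => g n q.1.1 q.2) :=
            ihm.comp ((measurable_fst.comp measurable_fst).prodMk measurable_snd)
          have h2 : Measurable (fun q : (ℝ × ℝ) × ℝ => g n q.1.2 q.2) :=
            ihm.comp ((measurable_snd.comp measurable_fst).prodMk measurable_snd)
          exact h1.add h2
        apply Measurable.add
        · apply Measurable.mul
          · exact (measurable_const.mul (hπmeas.comp measurable_snd))
          · exact measurable_cint (H := fun p u => g n p.1 u + g n p.2 u)
              (e1 := Prod.fst) (e2 := Prod.snd) hH measurable_fst measurable_snd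
        · exact hbmeas.comp (measurable_fst.prodMk measurable_snd)
      · refine ⟨ρ * Mp * (2 * B) + Mb, add_nonneg (mul_nonneg (mul_nonneg hρ0.le hK0) (by linarith)) hMb0, ?_⟩
        intro x hx y hy
        rw [hgrec n x y]
        have hcb : |cint x y (fun u => g n x u + g n y u)| ≤ 2 * B := by
          apply cint_bound hx hy (by linarith)
          intro u hu
          calc |g n x u + g n y u| ≤ |g n x u| + |g n y u| := abs_add_le _ _
            _ ≤ 2 * B := by linarith [hB x hx u hu, hB y hy u hu]
        calc |ρ * π y * cint x y (fun u => g n x u + g n y u) + b x y|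
            ≤ |ρ * π y * cint x y (fun u => g n x u + g n y u)| + |b x y| := abs_add_le _ _
          _ ≤ ρ * Mp * (2 * B) + Mb := by
              apply add_le_add _ (hMb x hx y hy)
              rw [abs_mul, abs_mul, abs_of_nonneg hρ0.le, abs_of_nonneg (hπnn y hy)]
              have h1 : π y ≤ Mp := hMp y hy
              have h2 := hπnn y hy
              calc ρ * π y * |cint x y (fun u => g n x u + g n y u)|
                  ≤ ρ * π y * (2 * B) :=
                    mul_le_mul_of_nonneg_left hcb (mul_nonneg hρ0.le h2)
                _ ≤ ρ * Mp * (2 * B) :=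
                    mul_le_mul_of_nonneg_right
                      (mul_le_mul_of_nonneg_left h1 hρ0.le) (by linarith)
  -- slice integrability
  have hiSlice : ∀ n : ℕ, ∀ x ∈ Set.Icc (0:ℝ) 1, ∀ a c : ℝ,
      Set.uIcc a c ⊆ Set.Icc (0:ℝ) 1 → IntervalIntegrable (fun u => g n x u) volume a c := by
    intro n x hx a c hac
    obtain ⟨hm, B, hB0, hB⟩ := hgm n
    exact II (hm.comp (measurable_const.prodMk measurable_id)) hac
      (fun u hu => hB x hx u hu)
  -- M bounds the initial difference
  have hMle : ∀ x ∈ Set.Icc (0:ℝ) 1, ∀ y ∈ Set.Icc (0:ℝ) 1, |g 1 x y - g 0 x y| ≤ M := by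
    intro x hx y hy
    obtain ⟨_, B1, _, hB1⟩ := hgm 1
    obtain ⟨_, B0, _, hB0⟩ := hgm 0
    have hbdd : BddAbove (Set.range fun q : Set.Icc (0:ℝ) 1 × Set.Icc (0:ℝ) 1 =>
        |g 1 (q.1 : ℝ) (q.2 : ℝ) - g 0 (q.1 : ℝ) (q.2 : ℝ)|) := by
      refine ⟨B1 + B0, ?_⟩
      rintro r ⟨⟨⟨u, hu⟩, ⟨v, hv⟩⟩, rfl⟩
      calc |g 1 u v - g 0 u v| ≤ |g 1 u v| + |g 0 u v| := abs_sub _ _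
        _ ≤ B1 + B0 := add_le_add (hB1 u hu v hv) (hB0 u hu v hv)
    rw [hM]
    exact le_ciSup hbdd (⟨⟨x, hx⟩, ⟨y, hy⟩⟩ :
      Set.Icc (0:ℝ) 1 × Set.Icc (0:ℝ) 1)
  have hM0 : 0 ≤ M := le_trans (abs_nonneg _)
    (hMle 0 ⟨le_rfl, zero_le_one⟩ 0 ⟨le_rfl, zero_le_one⟩)
  -- difference recurrence
  have hd : ∀ n : ℕ, ∀ x ∈ Set.Icc (0:ℝ) 1, ∀ y ∈ Set.Icc (0:ℝ) 1,
      g (n+2) x y - g (n+1) x y = ρ * π y *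
        cint x y (fun u => (g (n+1) x u - g n x u) + (g (n+1) y u - g n y u)) := by
    intro n x hx y hy
    rw [hgrec (n+1) x y, hgrec n x y]
    have hsub := cint_sub (h1 := fun u => g (n+1) x u + g (n+1) y u)
      (h2 := fun u => g n x u + g n y u)
      (fun a c hac => ((hiSlice (n+1) x hx a c hac).add (hiSlice (n+1) y hy a c hac)))
      (fun a c hac => ((hiSlice n x hx a c hac).add (hiSlice n y hy a c hac))) hx hy
    have heq : (fun u => (g (n+1) x u + g (n+1) y u) - (g n x u + g n y u))
        = fun u => (g (n+1) x u - g n x u) + (g (n+1) y u - g n y u) := by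
      funext u; ring
    rw [heq] at hsub
    rw [hsub]
    ring
  -- measurability of partial circular masses
  have hmc : ∀ z : ℝ, Measurable (fun u => cint z u π) := fun z =>
    measurable_cint (H := fun _ v => π v) (e1 := fun _ => z) (e2 := id)
      (hπmeas.comp measurable_snd) measurable_const measurable_id
  have hcabs : ∀ z ∈ Set.Icc (0:ℝ) 1, ∀ u ∈ Set.Icc (0:ℝ) 1, |cint z u π| ≤ 1 := by
    intro z hz u hu
    rw [abs_of_nonneg (cint_nonneg hz hu hπnn)]
    exact cint_le_one hπmeas hπnn hb' hπint hz hu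
  -- first-step estimate
  have est1 : ∀ x ∈ Set.Icc (0:ℝ) 1, ∀ u ∈ Set.Icc (0:ℝ) 1,
      |g 2 x u - g 1 x u| ≤ 2 * ρ * M * π u := by
    intro x hx u hu
    rw [hd 0 x hx u hu, abs_mul, abs_mul, abs_of_nonneg hρ0.le, abs_of_nonneg (hπnn u hu)]
    have hc : |cint x u (fun t => (g 1 x t - g 0 x t) + (g 1 u t - g 0 u t))| ≤ 2 * M := by
      apply cint_bound hx hu (by linarith)
      intro t ht
      calc |(g 1 x t - g 0 x t) + (g 1 u t - g 0 u t)|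
          ≤ |g 1 x t - g 0 x t| + |g 1 u t - g 0 u t| := abs_add_le _ _
        _ ≤ 2 * M := by linarith [hMle x hx t ht, hMle u hu t ht]
    calc ρ * π u * |cint x u (fun t => (g 1 x t - g 0 x t) + (g 1 u t - g 0 u t))|
        ≤ ρ * π u * (2 * M) := mul_le_mul_of_nonneg_left hc (mul_nonneg hρ0.le (hπnn u hu))
      _ = 2 * ρ * M * π u := by ring
  -- the contraction claim
  have claim : ∀ n : ℕ, 2 ≤ n → ∀ x ∈ Set.Icc (0:ℝ) 1, ∀ y ∈ Set.Icc (0:ℝ) 1,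
      |g (n + 1) x y - g n x y| ≤ 4 * ρ ^ n * π y * M * cint x y π := by
    intro n hn
    induction n, hn using Nat.le_induction with
    | base =>
      intro x hx y hy
      rw [show (2:ℕ) + 1 = 1 + 2 from rfl, hd 1 x hx y hy]
      have hcle : |cint x y (fun u => (g 2 x u - g 1 x u) + (g 2 y u - g 1 y u))|
          ≤ cint x y (fun u => (4 * ρ * M) * π u) := by
        apply cint_abs_le hx hy
        · intro a c hac
          exact ((hiSlice 2 x hx a c hac).sub (hiSlice 1 x hx a c hac)).add
            ((hiSlice 2 y hy a c hac).sub (hiSlice 1 y hy a c hac))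
        · intro a c hac
          exact (hii a c hac).const_mul _
        · intro u hu
          calc |(g 2 x u - g 1 x u) + (g 2 y u - g 1 y u)|
              ≤ |g 2 x u - g 1 x u| + |g 2 y u - g 1 y u| := abs_add_le _ _
            _ ≤ 2 * ρ * M * π u + 2 * ρ * M * π u := add_le_add (est1 x hx u hu) (est1 y hy u hu)
            _ = (4 * ρ * M) * π u := by ring
      rw [cint_const_mul] at hcle
      rw [abs_mul, abs_mul, abs_of_nonneg hρ0.le, abs_of_nonneg (hπnn y hy)]
      calc ρ * π y * |cint x y (fun u => (g 2 x u - g 1 x u) + (g 2 y u - g 1 y u))|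
          ≤ ρ * π y * (4 * ρ * M * cint x y π) :=
            mul_le_mul_of_nonneg_left hcle (mul_nonneg hρ0.le (hπnn y hy))
        _ = 4 * ρ ^ 2 * π y * M * cint x y π := by ring
    | succ n hn ih =>
      intro x hx y hy
      rw [show n + 1 + 1 = n + 2 from rfl, hd n x hx y hy]
      have hcle : |cint x y (fun u => (g (n+1) x u - g n x u) + (g (n+1) y u - g n y u))|
          ≤ cint x y (fun u => (4 * ρ ^ n * M) * (π u * (cint x u π + cint y u π))) := by
        apply cint_abs_le hx hy
        · intro a c hac
          exact ((hiSlice (n+1) x hx a c hac).sub (hiSlice n x hx a c hac)).add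
            ((hiSlice (n+1) y hy a c hac).sub (hiSlice n y hy a c hac))
        · intro a c hac
          apply IntervalIntegrable.const_mul
          apply II (hπmeas.mul ((hmc x).add (hmc y))) hac
          intro u hu
          rw [Pi.mul_apply, Pi.add_apply, abs_mul]
          have h2' : |cint x u π + cint y u π| ≤ 2 := by
            calc |cint x u π + cint y u π| ≤ |cint x u π| + |cint y u π| := abs_add_le _ _
              _ ≤ 2 := by linarith [hcabs x hx u hu, hcabs y hy u hu]
          exact mul_le_mul (hb' u hu) h2' (abs_nonneg _) hK0
        · intro u hu
          calc |(g (n+1) x u - g n x u) + (g (n+1) y u - g n y u)|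
              ≤ |g (n+1) x u - g n x u| + |g (n+1) y u - g n y u| := abs_add_le _ _
            _ ≤ 4 * ρ ^ n * π u * M * cint x u π + 4 * ρ ^ n * π u * M * cint y u π :=
                add_le_add (ih x hx u hu) (ih y hy u hu)
            _ = (4 * ρ ^ n * M) * (π u * (cint x u π + cint y u π)) := by ring
      rw [cint_const_mul, cint_key hπmeas hπnn hMp hπint hx hy] at hcle
      rw [abs_mul, abs_mul, abs_of_nonneg hρ0.le, abs_of_nonneg (hπnn y hy)]
      calc ρ * π y * |cint x y (fun u => (g (n+1) x u - g n x u) + (g (n+1) y u - g n y u))|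
          ≤ ρ * π y * (4 * ρ ^ n * M * cint x y π) :=
            mul_le_mul_of_nonneg_left hcle (mul_nonneg hρ0.le (hπnn y hy))
        _ = 4 * ρ ^ (n+1) * π y * M * cint x y π := by ring
  refine ⟨claim, ?_⟩
  -- pointwise convergence
  intro x hx y hy
  have hcle1 : cint x y π ≤ 1 := cint_le_one hπmeas hπnn hb' hπint hx hy
  have hcnn : 0 ≤ cint x y π := cint_nonneg hx hy hπnn
  set C := 4 * Mp * M with hC
  have hCb : ∀ n : ℕ, 2 ≤ n → |g (n+1) x y - g n x y| ≤ C * ρ ^ n := by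
    intro n hn
    refine le_trans (claim n hn x hx y hy) ?_
    have t1 : 0 ≤ 4 * ρ ^ n * M * (Mp - π y) :=
      mul_nonneg (mul_nonneg (mul_nonneg (by norm_num) (pow_nonneg hρ0.le n)) hM0)
        (sub_nonneg.2 (hMp y hy))
    have t2 : 0 ≤ 4 * ρ ^ n * M * π y * (1 - cint x y π) :=
      mul_nonneg (mul_nonneg (mul_nonneg (mul_nonneg (by norm_num) (pow_nonneg hρ0.le n)) hM0)
        (hπnn y hy)) (sub_nonneg.2 hcle1)
    rw [hC]
    nlinarith [t1, t2]
  set K := max C (max (|g 1 x y - g 0 x y|) (|g 2 x y - g 1 x y| / ρ)) with hKdef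
  have hdist : ∀ n : ℕ, dist (g n x y) (g (n+1) x y) ≤ K * ρ ^ n := by
    intro n
    rw [Real.dist_eq]
    match n with
    | 0 =>
      rw [abs_sub_comm, pow_zero, mul_one]
      exact le_trans (le_max_left _ _) (le_max_right _ _)
    | 1 =>
      rw [abs_sub_comm, pow_one]
      have he : |g 2 x y - g 1 x y| = |g 2 x y - g 1 x y| / ρ * ρ :=
        (div_mul_cancel₀ _ (ne_of_gt hρ0)).symm
      rw [he]
      exact mul_le_mul_of_nonneg_right
        (le_trans (le_max_right _ _) (le_max_right _ _)) hρ0.le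
    | (m+2) =>
      rw [abs_sub_comm]
      exact le_trans (hCb (m+2) (by omega))
        (mul_le_mul_of_nonneg_right (le_max_left _ _) (pow_nonneg hρ0.le _))
  exact cauchySeq_tendsto_of_complete (cauchySeq_of_le_geometric ρ K hρ1 hdist)
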